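/- Assume β ∈ [0,1] and M > 10. There exists a constant C > 0 (depending only on β and M) such that for all ω₁ > 1 one has C¹²³[n⁰¹, n⁰¹, n⁰¹](ω₁) ≤ C · ω₁^{2β − 1/2 − M/2}. -/

import Mathlib

open MeasureTheory Real

noncomputable section

/-- Japanese bracket ⟨ω⟩ = (1 + ω²)^{1/2}. -/
def jb (ω : ℝ) : ℝ := Real.sqrt (1 + ω ^ 2)

/-- n⁰¹(ω) = ⟨ω⟩^{-M/2}. -/
def n01 (M : ℝ) (ω : ℝ) : ℝ := jb ω ^ (-(M / 2))

/-- The operator C₂₁²³⁴, with ω₂ = ω₃ + ω₄ − ω₁. -/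
def C21op (β : ℝ) (k l m : ℝ → ℝ) (ω₁ : ℝ) : ℝ :=
  64 * π ^ 3 * ω₁ ^ (β - 1/2) *
    ∫ ω₃ in (0:ℝ)..(ω₁ / 2), ∫ ω₄ in (ω₁ - ω₃)..ω₁,
      (ω₃ + ω₄ - ω₁) ^ (β + 1/2) * ω₃ ^ β * ω₄ ^ β *
        (k (ω₃ + ω₄ - ω₁) * l ω₃ * m ω₄)

/-- The operator C₂₂²³⁴, with ω₂ = ω₃ + ω₄ − ω₁. -/
def C22op (β : ℝ) (k l m : ℝ → ℝ) (ω₁ : ℝ) : ℝ :=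
  64 * π ^ 3 * ω₁ ^ (β - 1/2) *
    ∫ ω₃ in (ω₁ / 2)..ω₁, ∫ ω₄ in ω₃..ω₁,
      (ω₃ + ω₄ - ω₁) ^ (β + 1/2) * ω₃ ^ β * ω₄ ^ β *
        (k (ω₃ + ω₄ - ω₁) * l ω₃ * m ω₄)

/-- The operator C₃²³⁴, with ω₂ = ω₃ + ω₄ − ω₁. -/
def C3op (β : ℝ) (k l m : ℝ → ℝ) (ω₁ : ℝ) : ℝ :=
  64 * π ^ 3 * ω₁ ^ (β - 1/2) *
    ∫ ω₃ in (0:ℝ)..ω₁, ∫ ω₄ in Set.Ioi ω₁,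
      (ω₃ + ω₄ - ω₁) ^ β * ω₃ ^ (β + 1/2) * ω₄ ^ β *
        (k (ω₃ + ω₄ - ω₁) * l ω₃ * m ω₄)

/-- The operator C₁²³⁴, with ω₂ = ω₃ + ω₄ − ω₁. -/
def C1op (β : ℝ) (k l m : ℝ → ℝ) (ω₁ : ℝ) : ℝ :=
  64 * π ^ 3 * ω₁ ^ β *
    ∫ ω₃ in Set.Ioi ω₁, ∫ ω₄ in Set.Ioi ω₃,
      (ω₃ + ω₄ - ω₁) ^ β * ω₃ ^ β * ω₄ ^ β *
        (k (ω₃ + ω₄ - ω₁) * l ω₃ * m ω₄)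

/-- The full domain of integration {0 ≤ ω₃ ≤ ω₄, ω₃ + ω₄ ≥ ω₁} ⊂ ℝ². -/
def Dom (ω₁ : ℝ) : Set (ℝ × ℝ) := {p | 0 ≤ p.1 ∧ p.1 ≤ p.2 ∧ ω₁ ≤ p.1 + p.2}

/-- The cross-section factor min{√ω₁, √ω₂, √ω₃}, with ω₂ = ω₃ + ω₄ − ω₁,
where p = (ω₃, ω₄). -/
def crossMin (ω₁ : ℝ) (p : ℝ × ℝ) : ℝ :=
  min (Real.sqrt ω₁) (min (Real.sqrt (p.1 + p.2 - ω₁)) (Real.sqrt p.1))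

/-- The operator C^{j₁j₂j₃}[k,l,m](ω₁) where the factor is k(ω_{j₁}) l(ω_{j₂}) m(ω_{j₃}),
with ω₂ = ω₃ + ω₄ − ω₁ and p = (ω₃, ω₄); here the selection of frequencies is passed
as a function `sel : (ℝ × ℝ) → ℝ × ℝ × ℝ` giving (ω_{j₁}, ω_{j₂}, ω_{j₃}). -/
def Cfull (β : ℝ) (k l m : ℝ → ℝ) (sel : ℝ → ℝ × ℝ → ℝ × ℝ × ℝ) (ω₁ : ℝ) : ℝ :=
  64 * π ^ 3 * ω₁ ^ (β - 1/2) *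
    ∫ p in Dom ω₁,
      ((p.1 + p.2 - ω₁) * p.1 * p.2) ^ β * crossMin ω₁ p *
        (k (sel ω₁ p).1 * l (sel ω₁ p).2.1 * m (sel ω₁ p).2.2)

/-- C²³⁴[k,l,m](ω₁): integrand k(ω₂) l(ω₃) m(ω₄). -/
def C234 (β : ℝ) (k l m : ℝ → ℝ) : ℝ → ℝ :=
  Cfull β k l m (fun ω₁ p => (p.1 + p.2 - ω₁, p.1, p.2))

/-- C¹²⁴[k,l,m](ω₁): integrand k(ω₁) l(ω₂) m(ω₄). -/
def C124 (β : ℝ) (k l m : ℝ → ℝ) : ℝ → ℝ :=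
  Cfull β k l m (fun ω₁ p => (ω₁, p.1 + p.2 - ω₁, p.2))

/-- C¹³⁴[k,l,m](ω₁): integrand k(ω₁) l(ω₃) m(ω₄). -/
def C134 (β : ℝ) (k l m : ℝ → ℝ) : ℝ → ℝ :=
  Cfull β k l m (fun ω₁ p => (ω₁, p.1, p.2))

/-- C¹²³[k,l,m](ω₁): integrand k(ω₁) l(ω₂) m(ω₃). -/
def C123 (β : ℝ) (k l m : ℝ → ℝ) : ℝ → ℝ :=
  Cfull β k l m (fun ω₁ p => (ω₁, p.1 + p.2 - ω₁, p.1))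



lemma jb_one_le (x : ℝ) : 1 ≤ jb x := by
  calc (1:ℝ) = Real.sqrt 1 := Real.sqrt_one.symm
    _ ≤ Real.sqrt (1 + x ^ 2) := Real.sqrt_le_sqrt (by nlinarith [sq_nonneg x])

lemma jb_pos (x : ℝ) : 0 < jb x := zero_lt_one.trans_le (jb_one_le x)

lemma le_jb (x : ℝ) : x ≤ jb x := by
  rcases le_or_gt x 0 with h | h
  · exact h.trans (jb_pos x).le
  · rw [jb, show (1 : ℝ) + x ^ 2 = x ^ 2 + 1 by ring]
    nlinarith [Real.sq_sqrt (show (0:ℝ) ≤ x ^ 2 + 1 by positivity),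
      Real.sqrt_nonneg (x ^ 2 + 1), sq_nonneg (Real.sqrt (x ^ 2 + 1) - x)]

lemma sqrt_le_jb (x : ℝ) : Real.sqrt x ≤ jb x :=
  Real.sqrt_le_sqrt (by nlinarith [sq_nonneg (x - 1)])

lemma jb_sq (x : ℝ) : jb x ^ 2 = 1 + x ^ 2 := Real.sq_sqrt (by positivity)

lemma one_add_le_two_jb (x : ℝ) : 1 + x ≤ 2 * jb x := by
  nlinarith [jb_sq x, jb_pos x, sq_nonneg (x - 1), sq_nonneg (2 * jb x - (1 + x))]

lemma n01_nonneg (M x : ℝ) : 0 ≤ n01 M x := Real.rpow_nonneg (jb_pos x).le _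

lemma n01_le (M : ℝ) (hM : 0 < M) {x : ℝ} (hx : 0 < x) : n01 M x ≤ x ^ (-(M / 2)) :=
  Real.rpow_le_rpow_of_nonpos hx (le_jb x) (by linarith)

lemma rpow_collect {M : ℝ} {a : ℝ} (ha : 0 < a) :
    a * a * a ^ (-(M / 2)) * a ^ 2 = a ^ (4 - M / 2) := by
  rw [show (4 - M / 2 : ℝ) = 1 + 1 + (-(M / 2)) + 2 by ring,
    Real.rpow_add ha, Real.rpow_add ha, Real.rpow_add ha, Real.rpow_one, Real.rpow_two]

lemma boundA {β M : ℝ} (hβ0 : 0 ≤ β) (hβ1 : β ≤ 1) (hM : 10 < M) {x : ℝ} (hx : 0 ≤ x) :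
    x ^ β * Real.sqrt x * n01 M x ≤ 8 * ((1 + |x|) ^ 2)⁻¹ := by
  rw [abs_of_nonneg hx, ← div_eq_mul_inv, le_div_iff₀ (by positivity)]
  have hJ1 : 1 ≤ jb x := jb_one_le x
  have h1 : x ^ β ≤ jb x := by
    calc x ^ β ≤ jb x ^ β := Real.rpow_le_rpow hx (le_jb x) hβ0
      _ ≤ jb x ^ (1:ℝ) := Real.rpow_le_rpow_of_exponent_le hJ1 hβ1
      _ = jb x := Real.rpow_one _
  have h3 : (1 + x) ^ 2 ≤ 4 * jb x ^ 2 := by nlinarith [jb_sq x, sq_nonneg (x - 1)]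
  calc x ^ β * Real.sqrt x * n01 M x * (1 + x) ^ 2
      ≤ jb x * jb x * (jb x ^ (-(M / 2))) * (4 * jb x ^ 2) := by
        apply mul_le_mul _ h3 (by positivity) (by positivity)
        apply mul_le_mul (mul_le_mul h1 (sqrt_le_jb x) (Real.sqrt_nonneg x) (jb_pos x).le)
          le_rfl (n01_nonneg M x) (by positivity)
      _ = 4 * jb x ^ (4 - M / 2) := by rw [← rpow_collect (jb_pos x)]; ring
      _ ≤ 8 := by
        have := Real.rpow_le_one_of_one_le_of_nonpos hJ1 (show 4 - M / 2 ≤ 0 by linarith)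
        linarith

lemma boundB {β M : ℝ} (hβ0 : 0 ≤ β) (hβ1 : β ≤ 1) (hM : 10 < M) {x : ℝ} (hx : 0 ≤ x) :
    x ^ β * (1 + x) ^ β * n01 M x ≤ 8 * ((1 + |x|) ^ 2)⁻¹ := by
  rw [abs_of_nonneg hx, ← div_eq_mul_inv, le_div_iff₀ (by positivity)]
  have hJ1 : 1 ≤ jb x := jb_one_le x
  have h1 : x ^ β ≤ jb x := by
    calc x ^ β ≤ jb x ^ β := Real.rpow_le_rpow hx (le_jb x) hβ0
      _ ≤ jb x ^ (1:ℝ) := Real.rpow_le_rpow_of_exponent_le hJ1 hβ1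
      _ = jb x := Real.rpow_one _
  have h2 : (1 + x) ^ β ≤ 2 * jb x := by
    calc (1 + x) ^ β ≤ (2 * jb x) ^ β :=
          Real.rpow_le_rpow (by positivity) (one_add_le_two_jb x) hβ0
      _ ≤ (2 * jb x) ^ (1:ℝ) := Real.rpow_le_rpow_of_exponent_le (by linarith) hβ1
      _ = 2 * jb x := Real.rpow_one _
  have h3 : (1 + x) ^ 2 ≤ 4 * jb x ^ 2 := by nlinarith [jb_sq x, sq_nonneg (x - 1)]
  calc x ^ β * (1 + x) ^ β * n01 M x * (1 + x) ^ 2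
      ≤ jb x * (2 * jb x) * (jb x ^ (-(M / 2))) * (4 * jb x ^ 2) := by
        apply mul_le_mul _ h3 (by positivity) (by positivity)
        apply mul_le_mul (mul_le_mul h1 h2 (by positivity) (jb_pos x).le)
          le_rfl (n01_nonneg M x) (by positivity)
      _ = 8 * jb x ^ (4 - M / 2) := by rw [← rpow_collect (jb_pos x)]; ring
      _ ≤ 8 := by
        have := Real.rpow_le_one_of_one_le_of_nonpos hJ1 (show 4 - M / 2 ≤ 0 by linarith)
        linarith

lemma pointwise_bound {β M : ℝ} (hβ0 : 0 ≤ β) (hβ1 : β ≤ 1) (hM : 10 < M) {ω₁ : ℝ}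
    (hω : 1 < ω₁) {p : ℝ × ℝ} (hp : p ∈ Dom ω₁) :
    ((p.1 + p.2 - ω₁) * p.1 * p.2) ^ β * crossMin ω₁ p *
        (n01 M ω₁ * n01 M (p.1 + p.2 - ω₁) * n01 M p.1) ≤
      64 * ω₁ ^ (β - M / 2) *
        (((1 + |p.1|) ^ 2)⁻¹ * ((1 + |p.1 + p.2 - ω₁|) ^ 2)⁻¹) := by
  obtain ⟨ha, hab, hsum⟩ := hp
  set a := p.1 with hadef
  set b := p.2 with hbdef
  set w := a + b - ω₁ with hwdef
  have hw : 0 ≤ w := by rw [hwdef]; linarith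
  have hb : 0 ≤ b := le_trans ha hab
  have hω0 : 0 < ω₁ := lt_trans zero_lt_one hω
  have hexp : (w * a * b) ^ β = w ^ β * a ^ β * b ^ β := by
    rw [Real.mul_rpow (mul_nonneg hw ha) hb, Real.mul_rpow hw ha]
  have hcross : crossMin ω₁ p ≤ Real.sqrt a := (min_le_right _ _).trans (min_le_right _ _)
  have hcross0 : 0 ≤ crossMin ω₁ p :=
    le_min (Real.sqrt_nonneg _) (le_min (Real.sqrt_nonneg _) (Real.sqrt_nonneg _))
  have hbβ : b ^ β ≤ ω₁ ^ β * (1 + w) ^ β := by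
    rw [← Real.mul_rpow hω0.le (by linarith)]
    exact Real.rpow_le_rpow hb (by nlinarith) hβ0
  have hn1 : n01 M ω₁ ≤ ω₁ ^ (-(M / 2)) := n01_le M (by linarith) hω0
  have hval : ω₁ ^ β * ω₁ ^ (-(M / 2)) = ω₁ ^ (β - M / 2) := by
    rw [← Real.rpow_add hω0]; ring_nf
  have nn1 : 0 ≤ w ^ β := Real.rpow_nonneg hw _
  have nn2 : 0 ≤ a ^ β := Real.rpow_nonneg ha _
  have nn3 : 0 ≤ (1 + w) ^ β := Real.rpow_nonneg (by linarith) _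
  have nn4 : 0 ≤ ω₁ ^ β := Real.rpow_nonneg hω0.le _
  have nn5 : 0 ≤ ω₁ ^ (-(M / 2)) := Real.rpow_nonneg hω0.le _
  have nn6 : 0 ≤ Real.sqrt a := Real.sqrt_nonneg a
  have nn7 : 0 ≤ n01 M a := n01_nonneg M a
  have nn8 : 0 ≤ n01 M w := n01_nonneg M w
  have nn9 : 0 ≤ n01 M ω₁ := n01_nonneg M ω₁
  calc (w * a * b) ^ β * crossMin ω₁ p * (n01 M ω₁ * n01 M w * n01 M a)
      ≤ (w ^ β * a ^ β * (ω₁ ^ β * (1 + w) ^ β)) * Real.sqrt a *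
          (ω₁ ^ (-(M / 2)) * n01 M w * n01 M a) := by
        rw [hexp]
        apply mul_le_mul _ _ (mul_nonneg (mul_nonneg nn9 nn8) nn7)
          (mul_nonneg (mul_nonneg (mul_nonneg nn1 nn2) (mul_nonneg nn4 nn3)) nn6)
        · apply mul_le_mul _ hcross hcross0
            (mul_nonneg (mul_nonneg nn1 nn2) (mul_nonneg nn4 nn3))
          exact mul_le_mul le_rfl hbβ (Real.rpow_nonneg hb _) (mul_nonneg nn1 nn2)
        · apply mul_le_mul _ le_rfl nn7 (mul_nonneg nn5 nn8)
          exact mul_le_mul hn1 le_rfl nn8 nn5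
    _ = (ω₁ ^ β * ω₁ ^ (-(M / 2))) *
          ((a ^ β * Real.sqrt a * n01 M a) * (w ^ β * (1 + w) ^ β * n01 M w)) := by ring
    _ ≤ ω₁ ^ (β - M / 2) *
          ((8 * ((1 + |a|) ^ 2)⁻¹) * (8 * ((1 + |w|) ^ 2)⁻¹)) := by
        rw [hval]
        apply mul_le_mul le_rfl _ _ (Real.rpow_nonneg hω0.le _)
        · exact mul_le_mul (boundA hβ0 hβ1 hM ha) (boundB hβ0 hβ1 hM hw)
            (mul_nonneg (mul_nonneg nn1 nn3) nn8) (by positivity)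
        · exact mul_nonneg (mul_nonneg (mul_nonneg nn2 nn6) nn7)
            (mul_nonneg (mul_nonneg nn1 nn3) nn8)
    _ = 64 * ω₁ ^ (β - M / 2) * (((1 + |a|) ^ 2)⁻¹ * ((1 + |w|) ^ 2)⁻¹) := by ring

/-- Upper bound: C¹²³[n⁰¹,n⁰¹,n⁰¹](ω₁) ≲ ω₁^{2β − 1/2 − M/2} for ω₁ > 1. -/
theorem C123_upper_bound (β M : ℝ) (hβ0 : 0 ≤ β) (hβ1 : β ≤ 1) (hM : 10 < M) :
    ∃ C : ℝ, 0 < C ∧ ∀ ω₁ : ℝ, 1 < ω₁ →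
      C123 β (n01 M) (n01 M) (n01 M) ω₁ ≤ C * ω₁ ^ (2 * β - 1/2 - M / 2) := by
  classical
  set g : ℝ → ℝ := fun x => ((1 + |x|) ^ 2)⁻¹ with hgdef
  have hg_int : Integrable g := by
    have h := integrable_one_add_norm (E := ℝ) (μ := volume) (r := 2) (by norm_num)
    have he : (fun x : ℝ => (1 + ‖x‖) ^ (-(2:ℝ))) = g := by
      funext x
      rw [hgdef, Real.norm_eq_abs, Real.rpow_neg (by positivity), Real.rpow_two]
    rwa [he] at h
  have hg_cont : Continuous g := by
    rw [hgdef]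
    exact ((continuous_const.add continuous_abs).pow 2).inv₀ (fun x => (pow_pos (by positivity : (0:ℝ) < 1 + |x|) 2).ne')
  have hg_nonneg : ∀ x, 0 ≤ g x := fun x => by rw [hgdef]; positivity
  set I : ℝ := ∫ x, g x with hIdef
  have hI0 : 0 ≤ I := integral_nonneg hg_nonneg
  refine ⟨4096 * π ^ 3 * (I * I) + 1, by
    nlinarith [pow_pos Real.pi_pos 3, mul_self_nonneg I], ?_⟩
  intro ω₁ hω
  have hω0 : 0 < ω₁ := lt_trans zero_lt_one hω
  have hinner : ∀ x : ℝ, (∫ y, g (x + y - ω₁)) = I := by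
    intro x
    have he : (fun y => g (x + y - ω₁)) = fun y => g (y + (x - ω₁)) := by
      funext y; congr 1; ring
    rw [he, integral_add_right_eq_self]
  have hF_meas : AEStronglyMeasurable (fun p : ℝ × ℝ => g p.1 * g (p.1 + p.2 - ω₁))
      ((volume : Measure ℝ).prod volume) :=
    ((hg_cont.comp continuous_fst).mul
      (hg_cont.comp ((continuous_fst.add continuous_snd).sub
        continuous_const))).aestronglyMeasurable
  have hF_int : Integrable (fun p : ℝ × ℝ => g p.1 * g (p.1 + p.2 - ω₁))
      ((volume : Measure ℝ).prod volume) := by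
    rw [integrable_prod_iff hF_meas]
    constructor
    · refine Filter.Eventually.of_forall (fun x => ?_)
      have he : (fun y => g x * g (x + y - ω₁)) = fun y => g x * g (y + (x - ω₁)) := by
        funext y; congr 2; ring
      simp only []
      rw [he]
      exact ((hg_int.comp_add_right (x - ω₁)).const_mul _)
    · have he : (fun x => ∫ y, ‖g x * g (x + y - ω₁)‖) = fun x => g x * I := by
        funext x
        have h1 : ∀ y : ℝ, ‖g x * g (x + y - ω₁)‖ = g x * g (x + y - ω₁) := fun y =>
          Real.norm_of_nonneg (mul_nonneg (hg_nonneg x) (hg_nonneg _))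
        simp only [h1, integral_const_mul, hinner x]
      simp only []
      rw [he]
      exact hg_int.mul_const I
  have hF_int' : Integrable (fun p : ℝ × ℝ => g p.1 * g (p.1 + p.2 - ω₁)) volume := by
    rw [Measure.volume_eq_prod ℝ ℝ]; exact hF_int
  have hF_val : (∫ p : ℝ × ℝ, g p.1 * g (p.1 + p.2 - ω₁)) = I * I := by
    rw [Measure.volume_eq_prod ℝ ℝ, integral_prod _ hF_int]
    have he : ∀ x : ℝ, (∫ y, g x * g (x + y - ω₁)) = g x * I := fun x => by
      rw [integral_const_mul, hinner x]
    simp only [he]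
    rw [integral_mul_const]
  have hDom : MeasurableSet (Dom ω₁) := by
    have he : Dom ω₁ = {p : ℝ × ℝ | 0 ≤ p.1} ∩
        ({p : ℝ × ℝ | p.1 ≤ p.2} ∩ {p : ℝ × ℝ | ω₁ ≤ p.1 + p.2}) := rfl
    rw [he]
    exact ((isClosed_le continuous_const continuous_fst).inter
      ((isClosed_le continuous_fst continuous_snd).inter
        (isClosed_le continuous_const (continuous_fst.add continuous_snd)))).measurableSet
  have hG_int : Integrable
      (fun p : ℝ × ℝ => 64 * ω₁ ^ (β - M / 2) * (g p.1 * g (p.1 + p.2 - ω₁))) volume :=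
    hF_int'.const_mul _
  have hf_nonneg : ∀ p ∈ Dom ω₁, 0 ≤
      ((p.1 + p.2 - ω₁) * p.1 * p.2) ^ β * crossMin ω₁ p *
        (n01 M ω₁ * n01 M (p.1 + p.2 - ω₁) * n01 M p.1) := by
    intro p hp
    obtain ⟨ha, hab, hsum⟩ := hp
    have hw : (0:ℝ) ≤ p.1 + p.2 - ω₁ := by linarith
    have hb : 0 ≤ p.2 := le_trans ha hab
    refine mul_nonneg (mul_nonneg (Real.rpow_nonneg ?_ _) ?_)
      (mul_nonneg (mul_nonneg (n01_nonneg M ω₁) (n01_nonneg M _)) (n01_nonneg M _))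
    · exact mul_nonneg (mul_nonneg hw ha) hb
    · exact le_min (Real.sqrt_nonneg _) (le_min (Real.sqrt_nonneg _) (Real.sqrt_nonneg _))
  have key : (∫ p in Dom ω₁,
        ((p.1 + p.2 - ω₁) * p.1 * p.2) ^ β * crossMin ω₁ p *
          (n01 M ω₁ * n01 M (p.1 + p.2 - ω₁) * n01 M p.1)) ≤
      64 * ω₁ ^ (β - M / 2) * (I * I) := by
    have h1 : (∫ p in Dom ω₁,
          ((p.1 + p.2 - ω₁) * p.1 * p.2) ^ β * crossMin ω₁ p *
            (n01 M ω₁ * n01 M (p.1 + p.2 - ω₁) * n01 M p.1)) ≤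
        ∫ p in Dom ω₁, 64 * ω₁ ^ (β - M / 2) * (g p.1 * g (p.1 + p.2 - ω₁)) := by
      apply integral_mono_of_nonneg
      · exact (ae_restrict_iff' hDom).2 (Filter.Eventually.of_forall hf_nonneg)
      · exact hG_int.restrict
      · refine (ae_restrict_iff' hDom).2 (Filter.Eventually.of_forall (fun p hp => ?_))
        exact pointwise_bound hβ0 hβ1 hM hω hp
    have h2 : (∫ p in Dom ω₁, 64 * ω₁ ^ (β - M / 2) * (g p.1 * g (p.1 + p.2 - ω₁))) ≤
        ∫ p : ℝ × ℝ, 64 * ω₁ ^ (β - M / 2) * (g p.1 * g (p.1 + p.2 - ω₁)) := by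
      apply setIntegral_le_integral hG_int
      refine Filter.Eventually.of_forall (fun p => ?_)
      have := Real.rpow_nonneg hω0.le (β - M / 2)
      have := hg_nonneg p.1
      have := hg_nonneg (p.1 + p.2 - ω₁)
      positivity
    have h3 : (∫ p : ℝ × ℝ, 64 * ω₁ ^ (β - M / 2) * (g p.1 * g (p.1 + p.2 - ω₁))) =
        64 * ω₁ ^ (β - M / 2) * (I * I) := by
      rw [integral_const_mul, hF_val]
    linarith
  have expand : C123 β (n01 M) (n01 M) (n01 M) ω₁ =
      64 * π ^ 3 * ω₁ ^ (β - 1/2) *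
        ∫ p in Dom ω₁,
          ((p.1 + p.2 - ω₁) * p.1 * p.2) ^ β * crossMin ω₁ p *
            (n01 M ω₁ * n01 M (p.1 + p.2 - ω₁) * n01 M p.1) := by
    simp only [C123, Cfull]
  rw [expand]
  have hc0 : (0:ℝ) ≤ 64 * π ^ 3 * ω₁ ^ (β - 1/2) :=
    mul_nonneg (by positivity) (Real.rpow_nonneg hω0.le _)
  calc 64 * π ^ 3 * ω₁ ^ (β - 1/2) *
        ∫ p in Dom ω₁,
          ((p.1 + p.2 - ω₁) * p.1 * p.2) ^ β * crossMin ω₁ p *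
            (n01 M ω₁ * n01 M (p.1 + p.2 - ω₁) * n01 M p.1)
      ≤ 64 * π ^ 3 * ω₁ ^ (β - 1/2) * (64 * ω₁ ^ (β - M / 2) * (I * I)) :=
        mul_le_mul_of_nonneg_left key hc0
    _ = (4096 * π ^ 3 * (I * I)) * (ω₁ ^ (β - 1/2) * ω₁ ^ (β - M / 2)) := by ring
    _ = (4096 * π ^ 3 * (I * I)) * ω₁ ^ (2 * β - 1/2 - M / 2) := by
        rw [← Real.rpow_add hω0, show (β - 1/2) + (β - M / 2) = 2 * β - 1/2 - M / 2 by ring]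
    _ ≤ (4096 * π ^ 3 * (I * I) + 1) * ω₁ ^ (2 * β - 1/2 - M / 2) := by
        apply mul_le_mul_of_nonneg_right (by linarith) (Real.rpow_nonneg hω0.le _)
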